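/- arXiv:2402.06381 — 3 statements merged into one kernel-verified Lean document; each statement's English description precedes it below -/
import Mathlib

section
/- (Bernstein inequality for trigonometric polynomials with frequencies in [−b, 0].) If h(x) = Σ_{k=1}^n c_k e^{iλ_k x} with all λ_k ∈ [−b, 0], then ‖h′‖_∞ ≤ b·‖h‖_∞. -/
open Complex

open Real in
lemma S1 {x : ℝ} (hx : x ∈ Set.Icc (0:ℝ) 1) :
    HasSum (fun n : ℕ => 1 / (n : ℝ) ^ 2 * Real.cos (2 * π * n * x))
      (π ^ 2 * (x ^ 2 - x + 1/6)) := by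
  have := hasSum_one_div_nat_pow_mul_cos (k := 1) one_ne_zero hx
  convert this using 1
  have h2 : bernoulli 2 = 1/6 := by
    rw [bernoulli, bernoulli'_two]; norm_num
  have hB : (Polynomial.map (algebraMap ℚ ℝ) (Polynomial.bernoulli 2)).eval x
      = x ^ 2 - x + 1/6 := by
    simp [Polynomial.bernoulli, Finset.sum_range_succ, h2, bernoulli_one, bernoulli_zero]
    push_cast
    ring
  have hf : (((2 * 1 : ℕ).factorial : ℝ)) = 2 := by norm_num [Nat.factorial]
  rw [show (2 * 1 : ℕ) = 2 by norm_num, hB, hf]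
  ring

open Real in
lemma Sodd {ψ : ℝ} (hψ : ψ ∈ Set.Icc (0:ℝ) π) :
    HasSum (fun m : ℕ => Real.cos ((2 * m + 1) * ψ) / (2 * (m:ℝ) + 1) ^ 2)
      (π ^ 2 / 8 - π * ψ / 4) := by
  have hπ := Real.pi_pos
  obtain ⟨h0, h1⟩ := hψ
  have hx1 : ψ / (2 * π) ∈ Set.Icc (0:ℝ) 1 := by
    constructor
    · positivity
    · rw [div_le_one (by positivity)]; nlinarith
  have hx2 : ψ / π ∈ Set.Icc (0:ℝ) 1 := by
    constructor
    · positivity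
    · rw [div_le_one (by positivity)]; linarith
  have hT1 := S1 hx1
  have hT2 := S1 hx2
  have e1 : ∀ n : ℕ, 2 * π * n * (ψ / (2 * π)) = n * ψ := by
    intro n; field_simp
  have e2 : ∀ n : ℕ, 2 * π * n * (ψ / π) = 2 * n * ψ := by
    intro n; field_simp
  simp only [e1] at hT1
  simp only [e2] at hT2
  have v1 : π ^ 2 * ((ψ / (2 * π)) ^ 2 - ψ / (2 * π) + 1/6)
      = ψ ^ 2 / 4 - π * ψ / 2 + π ^ 2 / 6 := by
    field_simp; ring
  have v2 : π ^ 2 * ((ψ / π) ^ 2 - ψ / π + 1/6)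
      = ψ ^ 2 - π * ψ + π ^ 2 / 6 := by
    field_simp
  rw [v1] at hT1
  rw [v2] at hT2
  set f : ℕ → ℝ := fun n => 1 / (n : ℝ) ^ 2 * Real.cos (n * ψ) with hf
  -- even part
  have heven : HasSum (fun m : ℕ => f (2 * m))
      ((ψ ^ 2 - π * ψ + π ^ 2 / 6) / 4) := by
    have key : ∀ m : ℕ, f (2 * m) = (1 / ((m:ℝ)) ^ 2 * Real.cos (2 * m * ψ)) / 4 := by
      intro m
      rcases eq_or_ne m 0 with rfl | hm
      · simp [hf]
      · have hc : ((2 * m : ℕ) : ℝ) = 2 * m := by push_cast; ring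
        simp only [hf, hc]
        have hm' : (m:ℝ) ≠ 0 := Nat.cast_ne_zero.mpr hm
        set t := Real.cos (2 * (m:ℝ) * ψ) with ht
        field_simp
        ring
    rw [funext key]
    exact hT2.div_const 4
  have hinj : Function.Injective (fun m : ℕ => 2 * m + 1) := by
    intro a b hab; dsimp at hab; omega
  have hodd_summable : Summable (fun m : ℕ => f (2 * m + 1)) := by
    exact (hT1.summable).comp_injective hinj
  have hodd := hodd_summable.hasSum
  have hall := heven.even_add_odd hodd
  have hsum : (ψ ^ 2 - π * ψ + π ^ 2 / 6) / 4 + ∑' m, f (2 * m + 1)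
      = ψ ^ 2 / 4 - π * ψ / 2 + π ^ 2 / 6 := hall.unique hT1
  have hval : ∑' m, f (2 * m + 1) = π ^ 2 / 8 - π * ψ / 4 := by linarith
  rw [hval] at hodd
  have ef : (fun m : ℕ => Real.cos ((2 * m + 1) * ψ) / (2 * (m:ℝ) + 1) ^ 2)
      = fun m : ℕ => f (2 * m + 1) := by
    funext m
    have hc : ((2 * m + 1 : ℕ) : ℝ) = 2 * m + 1 := by push_cast; ring
    simp only [hf, hc]
    ring
  rw [ef]
  exact hodd

open Real in
lemma key {b lam : ℝ} (hb : 0 < b) (hl : lam ∈ Set.Icc (-b) 0) (x : ℝ) :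
    HasSum (fun m : ℕ =>
      ((2 * b / π ^ 2 / (2 * (m:ℝ) + 1) ^ 2 : ℝ) : ℂ) * Complex.I *
        (Complex.exp (Complex.I * lam * ((x + (2 * m + 1) * π / b : ℝ) : ℂ)) +
         Complex.exp (Complex.I * lam * ((x - (2 * m + 1) * π / b : ℝ) : ℂ))))
      ((Complex.I * lam + Complex.I * b / 2) * Complex.exp (Complex.I * lam * x)) := by
  have hπ := Real.pi_pos
  obtain ⟨hl1, hl2⟩ := hl
  set ψ := -lam * π / b with hψdef
  have hψ : ψ ∈ Set.Icc (0:ℝ) π := by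
    constructor
    · rw [hψdef]
      have : 0 ≤ -lam := by linarith
      positivity
    · rw [hψdef, div_le_iff₀ hb]
      nlinarith
  have hre := Sodd hψ
  set K : ℂ := Complex.I * Complex.exp (Complex.I * lam * x) * ((4 * b / π ^ 2 : ℝ) : ℂ) with hK
  have H := (Complex.hasSum_ofReal.mpr hre).mul_left K
  have hexp : ∀ t : ℝ, Complex.exp (Complex.I * lam * ((x + t : ℝ) : ℂ)) +
      Complex.exp (Complex.I * lam * ((x - t : ℝ) : ℂ))
      = Complex.exp (Complex.I * lam * x) * (2 * ((Real.cos (lam * t) : ℝ) : ℂ)) := by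
    intro t
    have e1 : Complex.I * lam * ((x + t : ℝ) : ℂ)
        = Complex.I * lam * x + ((lam * t : ℝ) : ℂ) * Complex.I := by push_cast; ring
    have e2 : Complex.I * lam * ((x - t : ℝ) : ℂ)
        = Complex.I * lam * x + (-((lam * t : ℝ) : ℂ)) * Complex.I := by push_cast; ring
    rw [e1, e2, Complex.exp_add, Complex.exp_add, ← mul_add, ← Complex.two_cos,
      Complex.ofReal_cos]
  have hfun : (fun m : ℕ =>
      ((2 * b / π ^ 2 / (2 * (m:ℝ) + 1) ^ 2 : ℝ) : ℂ) * Complex.I *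
        (Complex.exp (Complex.I * lam * ((x + (2 * m + 1) * π / b : ℝ) : ℂ)) +
         Complex.exp (Complex.I * lam * ((x - (2 * m + 1) * π / b : ℝ) : ℂ))))
      = fun m : ℕ => K * ((Real.cos ((2 * m + 1) * ψ) / (2 * (m:ℝ) + 1) ^ 2 : ℝ) : ℂ) := by
    funext m
    rw [hexp ((2 * m + 1) * π / b)]
    have hcos : Real.cos (lam * ((2 * m + 1) * π / b)) = Real.cos ((2 * m + 1) * ψ) := by
      rw [← Real.cos_neg (lam * _)]
      congr 1
      rw [hψdef]
      ring
    rw [hcos, hK]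
    push_cast
    ring
  have hval : (Complex.I * lam + Complex.I * b / 2) * Complex.exp (Complex.I * lam * x)
      = K * ((π ^ 2 / 8 - π * ψ / 4 : ℝ) : ℂ) := by
    rw [hK, hψdef]
    have hπ' : (π : ℂ) ≠ 0 := Complex.ofReal_ne_zero.mpr hπ.ne'
    have hb' : (b : ℂ) ≠ 0 := Complex.ofReal_ne_zero.mpr hb.ne'
    push_cast
    field_simp
    ring
  rw [hfun, hval]
  exact H

open Real in
/-- Bernstein inequality for trigonometric polynomials with frequencies in `[-b, 0]`:
if `h x = ∑ cₖ e^{iλₖ x}` with all `λₖ ∈ [-b, 0]`, then `‖h'‖_∞ ≤ b ‖h‖_∞`. -/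
theorem bernstein_trigPoly (b : ℝ) (hb : 0 < b) (n : ℕ) (c : Fin n → ℂ) (lam : Fin n → ℝ)
    (hlam : ∀ k, lam k ∈ Set.Icc (-b) 0)
    (h : ℝ → ℂ)
    (hh : ∀ x : ℝ, h x = ∑ k, c k * Complex.exp (Complex.I * (lam k : ℂ) * (x : ℂ))) :
    ∀ x : ℝ, ‖deriv h x‖ ≤ b * ⨆ y : ℝ, ‖h y‖ := by
  intro x
  have hπ := Real.pi_pos
  -- norms of unimodular exponentials
  have hnorm_exp : ∀ l y : ℝ, ‖Complex.exp (Complex.I * l * y)‖ = 1 := by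
    intro l y
    have e : Complex.I * l * y = ((l * y : ℝ) : ℂ) * Complex.I := by push_cast; ring
    rw [e, Complex.norm_exp]
    simp
  -- boundedness of ‖h‖
  have hbdd : BddAbove (Set.range fun y : ℝ => ‖h y‖) := by
    refine ⟨∑ k, ‖c k‖, ?_⟩
    rintro - ⟨y, rfl⟩
    show ‖h y‖ ≤ _
    rw [hh y]
    refine le_trans (norm_sum_le _ _) (le_of_eq (Finset.sum_congr rfl fun k _ => ?_))
    rw [norm_mul, hnorm_exp, mul_one]
  set M := ⨆ y : ℝ, ‖h y‖ with hM
  have hMy : ∀ y, ‖h y‖ ≤ M := fun y => le_ciSup hbdd y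
  have hM0 : 0 ≤ M := le_trans (norm_nonneg _) (hMy 0)
  -- derivative of h
  have hfun : h = fun x : ℝ => ∑ k, c k * Complex.exp (Complex.I * lam k * x) := funext hh
  have hderiv : HasDerivAt h
      (∑ k, c k * ((Complex.I * lam k) * Complex.exp (Complex.I * lam k * x))) x := by
    rw [hfun]
    apply HasDerivAt.fun_sum
    intro k _
    have h1 : HasDerivAt (fun z : ℂ => Complex.exp (Complex.I * lam k * z))
        (Complex.exp (Complex.I * lam k * x) * (Complex.I * lam k)) ((x : ℝ) : ℂ) := by
      simpa using ((hasDerivAt_id ((x:ℝ):ℂ)).const_mul (Complex.I * (lam k : ℂ))).cexp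
    have h2 := (h1.comp_ofReal).const_mul (c k)
    convert h2 using 1
    rfl
    ring
  have hD : deriv h x
      = ∑ k, c k * ((Complex.I * lam k) * Complex.exp (Complex.I * lam k * x)) := hderiv.deriv
  -- the interpolation series
  have hsumk := hasSum_sum (s := (Finset.univ : Finset (Fin n)))
    (fun k _ => (key hb (hlam k) x).mul_left (c k))
  set D : ℕ → ℂ := fun m => ((2 * b / π ^ 2 / (2 * (m:ℝ) + 1) ^ 2 : ℝ) : ℂ) * Complex.I
    with hDdef
  have hswap : (fun m : ℕ => ∑ k, c k * (D m *
        (Complex.exp (Complex.I * lam k * ((x + (2 * m + 1) * π / b : ℝ) : ℂ)) +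
         Complex.exp (Complex.I * lam k * ((x - (2 * m + 1) * π / b : ℝ) : ℂ)))))
      = fun m : ℕ => D m * (h (x + (2 * m + 1) * π / b) + h (x - (2 * m + 1) * π / b)) := by
    funext m
    rw [hh (x + (2 * m + 1) * π / b), hh (x - (2 * m + 1) * π / b), mul_add,
      Finset.mul_sum, Finset.mul_sum, ← Finset.sum_add_distrib]
    exact Finset.sum_congr rfl fun k _ => by ring
  have hVal : ∑ k, c k * ((Complex.I * lam k + Complex.I * b / 2)
        * Complex.exp (Complex.I * lam k * x))
      = deriv h x + Complex.I * b / 2 * h x := by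
    rw [hD, hh x, Finset.mul_sum, ← Finset.sum_add_distrib]
    exact Finset.sum_congr rfl fun k _ => by ring
  rw [show (fun m : ℕ => ∑ k, c k * (D m *
        (Complex.exp (Complex.I * lam k * ((x + (2 * m + 1) * π / b : ℝ) : ℂ)) +
         Complex.exp (Complex.I * lam k * ((x - (2 * m + 1) * π / b : ℝ) : ℂ)))))
      = _ from hswap, hVal] at hsumk
  -- hsumk : HasSum (fun m => D m * (h (x + tm) + h (x - tm))) (deriv h x + I b/2 h x)
  -- summable majorant
  have h0 : HasSum (fun m : ℕ => 1 / (2 * (m:ℝ) + 1) ^ 2) (π ^ 2 / 8) := by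
    have := Sodd (ψ := 0) ⟨le_refl _, hπ.le⟩
    simpa using this
  have hg := h0.mul_left (2 * b / π ^ 2 * (2 * M))
  have hgval : 2 * b / π ^ 2 * (2 * M) * (π ^ 2 / 8) = b * M / 2 := by
    field_simp
    ring
  rw [hgval] at hg
  -- termwise bound
  have hcoef : ∀ m : ℕ, (0:ℝ) ≤ 2 * b / π ^ 2 / (2 * (m:ℝ) + 1) ^ 2 := by
    intro m; positivity
  have hbound : ∀ m : ℕ, ‖D m * (h (x + (2 * m + 1) * π / b) + h (x - (2 * m + 1) * π / b))‖
      ≤ 2 * b / π ^ 2 * (2 * M) * (1 / (2 * (m:ℝ) + 1) ^ 2) := by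
    intro m
    rw [hDdef]
    simp only [norm_mul, Complex.norm_real, Complex.norm_I, mul_one, Real.norm_eq_abs,
      _root_.abs_of_nonneg (hcoef m)]
    have hhh : ‖h (x + (2 * m + 1) * π / b) + h (x - (2 * m + 1) * π / b)‖ ≤ 2 * M := by
      refine le_trans (norm_add_le _ _) ?_
      have := hMy (x + (2 * m + 1) * π / b)
      have := hMy (x - (2 * m + 1) * π / b)
      linarith
    calc 2 * b / π ^ 2 / (2 * (m:ℝ) + 1) ^ 2 * ‖_ + _‖
        ≤ 2 * b / π ^ 2 / (2 * (m:ℝ) + 1) ^ 2 * (2 * M) := by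
          exact mul_le_mul_of_nonneg_left hhh (hcoef m)
      _ = 2 * b / π ^ 2 * (2 * M) * (1 / (2 * (m:ℝ) + 1) ^ 2) := by ring
  have hGnorm : Summable (fun m : ℕ =>
      ‖D m * (h (x + (2 * m + 1) * π / b) + h (x - (2 * m + 1) * π / b))‖) :=
    Summable.of_nonneg_of_le (fun m => norm_nonneg _) hbound hg.summable
  have hnormV : ‖deriv h x + Complex.I * b / 2 * h x‖ ≤ b * M / 2 := by
    rw [← hsumk.tsum_eq]
    refine le_trans (norm_tsum_le_tsum_norm hGnorm) ?_
    rw [← hg.tsum_eq]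
    exact Summable.tsum_le_tsum hbound hGnorm hg.summable
  have hlast : ‖Complex.I * b / 2 * h x‖ ≤ b / 2 * M := by
    rw [norm_mul, norm_div, norm_mul, Complex.norm_I, one_mul, Complex.norm_real,
      Real.norm_eq_abs, _root_.abs_of_nonneg hb.le,
      show ‖(2:ℂ)‖ = 2 by norm_num]
    exact mul_le_mul_of_nonneg_left (hMy x) (by positivity)
  calc ‖deriv h x‖
      = ‖(deriv h x + Complex.I * b / 2 * h x) - Complex.I * b / 2 * h x‖ := by ring_nf
    _ ≤ ‖deriv h x + Complex.I * b / 2 * h x‖ + ‖Complex.I * b / 2 * h x‖ := norm_sub_le _ _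
    _ ≤ b * M / 2 + b / 2 * M := add_le_add hnormV hlast
    _ = b * M := by ring
end

section
/- Let f ∈ L²₊(ℝ) and let (h_n) be a sequence of trigonometric polynomials with nonpositive frequencies satisfying ‖h_n‖_∞ ≤ 1 for all n. Then there exists a subsequence (n_j) such that P₊(f·h_{n_j}) converges in L² norm. (Compactness of the Hankel-type operator H_f(h) = P₊(f h).) -/
open MeasureTheory Complex Filter
open scoped ENNReal NNReal Topology

/-- `F` is the Fourier–Plancherel transform on `L²(ℝ)`. -/
def IsFourierPlancherel
    (F : Lp ℂ 2 (volume : Measure ℝ) ≃ₗᵢ[ℂ] Lp ℂ 2 (volume : Measure ℝ)) : Prop :=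
  ∀ g : Lp ℂ 2 (volume : Measure ℝ), Integrable (⇑g) volume →
    (⇑(F g)) =ᵐ[volume] fun ξ : ℝ =>
      ((Real.sqrt (2 * Real.pi) : ℂ))⁻¹ * ∫ t : ℝ, Complex.exp (-(Complex.I * ξ * t)) * g t

noncomputable section

namespace HankelAux

local notation "L2" => Lp ℂ 2 (volume : Measure ℝ)



lemma coeFn_finset_sum {ι : Type*} (s : Finset ι) (v : ι → L2) :
    ⇑(∑ k ∈ s, v k) =ᵐ[volume] fun x => ∑ k ∈ s, (v k : ℝ → ℂ) x := by
  classical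
  induction s using Finset.induction_on with
  | empty =>
    simp only [Finset.sum_empty]
    exact Lp.coeFn_zero (E := ℂ) (p := 2) (μ := (volume : Measure ℝ))
  | insert a s' hk ih =>
    rw [Finset.sum_insert hk]
    filter_upwards [Lp.coeFn_add (v a) (∑ k ∈ s', v k), ih] with x hx hx2
    simp only [hx, Pi.add_apply, hx2, Finset.sum_insert hk]

lemma ae_eq_finset_sum {ι : Type*} (s : Finset ι) (f g : ι → ℝ → ℂ)
    (h : ∀ k ∈ s, f k =ᵐ[volume] g k) :
    (fun x => ∑ k ∈ s, f k x) =ᵐ[volume] fun x => ∑ k ∈ s, g k x := by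
  classical
  induction s using Finset.induction_on with
  | empty => simp
  | insert a s' hk ih =>
    filter_upwards [h a (Finset.mem_insert_self a s'),
      ih fun k hks => h k (Finset.mem_insert_of_mem hks)] with x hx hx2
    simp only [Finset.sum_insert hk, hx, hx2]

lemma norm_exp_I_mul (μr x : ℝ) : ‖Complex.exp (Complex.I * μr * x)‖ = 1 := by
  rw [Complex.norm_exp]
  simp

lemma memℒp_mod (μr : ℝ) (g : L2) :
    MemLp (fun x : ℝ => Complex.exp (Complex.I * μr * x) * g x) 2 volume := by
  refine MemLp.of_le (Lp.memLp g) ?_ (ae_of_all _ fun x => ?_)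
  · exact ((Complex.continuous_exp.comp (by continuity)).aestronglyMeasurable).mul
      (Lp.aestronglyMeasurable g)
  · rw [norm_mul, norm_exp_I_mul, one_mul]

/-- modulation operator on `L²(ℝ)` (pointwise definition). -/
def Mop (μr : ℝ) (g : L2) : L2 := (memℒp_mod μr g).toLp _

lemma Mop_coe (μr : ℝ) (g : L2) :
    ⇑(Mop μr g) =ᵐ[volume] fun x => Complex.exp (Complex.I * μr * x) * g x :=
  MemLp.coeFn_toLp _

lemma Mop_norm_sub_le (μr : ℝ) (g g' : L2) : ‖Mop μr g - Mop μr g'‖ ≤ ‖g - g'‖ := by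
  rw [Lp.norm_def, Lp.norm_def]
  refine ENNReal.toReal_mono (Lp.eLpNorm_ne_top _) ?_
  have h1 : ⇑(Mop μr g - Mop μr g') =ᵐ[volume]
      fun x => Complex.exp (Complex.I * μr * x) * (g x - g' x) := by
    filter_upwards [Lp.coeFn_sub (Mop μr g) (Mop μr g'), Mop_coe μr g, Mop_coe μr g'] with x hx h2 h3
    rw [hx, Pi.sub_apply, h2, h3, mul_sub]
  rw [eLpNorm_congr_ae h1, eLpNorm_congr_ae (Lp.coeFn_sub g g')]
  refine eLpNorm_mono_ae (ae_of_all _ fun x => ?_)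
  rw [norm_mul, norm_exp_I_mul, one_mul]
  simp

/-- translation operator -/
def Tr (μr : ℝ) : L2 →+ L2 :=
  Lp.compMeasurePreserving (fun ξ : ℝ => ξ + (-μr)) (measurePreserving_add_right volume (-μr))

lemma Tr_coe (μr : ℝ) (w : L2) : ⇑(Tr μr w) =ᵐ[volume] fun ξ => w (ξ - μr) := by
  have := Lp.coeFn_compMeasurePreserving w (measurePreserving_add_right volume (-μr))
  filter_upwards [this] with ξ hξ
  simp only [Function.comp_apply] at hξ
  rw [sub_eq_add_neg]
  exact hξ

lemma Tr_norm_sub_le (μr : ℝ) (w w' : L2) : ‖Tr μr w - Tr μr w'‖ ≤ ‖w - w'‖ := by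
  rw [show Tr μr w - Tr μr w' = Tr μr (w - w') by
    simp [Tr, map_sub]]
  exact le_of_eq (Lp.norm_compMeasurePreserving _ _)



lemma norm_exp_neg_I (ξ t : ℝ) : ‖Complex.exp (-(Complex.I * ξ * t))‖ = 1 := by
  rw [Complex.norm_exp]
  simp

lemma norm_inv_sqrt_le_one : ‖((Real.sqrt (2 * Real.pi) : ℂ))⁻¹‖ ≤ 1 := by
  rw [norm_inv]
  have h1 : (1 : ℝ) ≤ Real.sqrt (2 * Real.pi) := by
    rw [show (1 : ℝ) = Real.sqrt 1 by simp]
    exact Real.sqrt_le_sqrt (by nlinarith [Real.pi_gt_three])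
  have h2 : ‖((Real.sqrt (2 * Real.pi) : ℂ))‖ = Real.sqrt (2 * Real.pi) := by
    rw [Complex.norm_real, Real.norm_eq_abs, _root_.abs_of_nonneg (Real.sqrt_nonneg _)]
  rw [h2]
  rw [inv_le_one_iff₀]
  right
  exact h1

lemma ker_integrable {f₀ hn : ℝ → ℂ} (hint : Integrable f₀ volume)
    (hmeas : AEStronglyMeasurable hn volume) (hb : ∀ x, ‖hn x‖ ≤ 1) (ξ : ℝ) :
    Integrable (fun t : ℝ => Complex.exp (-(Complex.I * ξ * t)) * (f₀ t * hn t)) volume := by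
  have h1 : Integrable (fun t : ℝ => f₀ t * hn t) volume := by
    refine (Integrable.bdd_mul hint hmeas (c := 1) (ae_of_all _ hb)).congr (ae_of_all _ fun t => ?_)
    exact mul_comm _ _
  refine Integrable.bdd_mul h1 ?_ (c := 1) (ae_of_all _ fun t => le_of_eq (norm_exp_neg_I ξ t))
  exact (Complex.continuous_exp.comp (by continuity)).aestronglyMeasurable

lemma prod_norm_le {f₀ hn : ℝ → ℂ} (hb : ∀ x, ‖hn x‖ ≤ 1) (t : ℝ) :
    ‖f₀ t * hn t‖ ≤ ‖f₀ t‖ := by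
  rw [norm_mul]
  exact mul_le_of_le_one_right (norm_nonneg _) (hb t)

lemma Wbd {f₀ hn : ℝ → ℂ} (hint : Integrable f₀ volume)
    (hmeas : AEStronglyMeasurable hn volume) (hb : ∀ x, ‖hn x‖ ≤ 1) (ξ : ℝ) :
    ‖((Real.sqrt (2 * Real.pi) : ℂ))⁻¹ *
      ∫ t : ℝ, Complex.exp (-(Complex.I * ξ * t)) * (f₀ t * hn t)‖
      ≤ ∫ t : ℝ, ‖f₀ t‖ := by
  rw [norm_mul]
  refine le_trans (mul_le_of_le_one_left (norm_nonneg _) norm_inv_sqrt_le_one) ?_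
  refine norm_integral_le_of_norm_le hint.norm (ae_of_all _ fun t => ?_)
  rw [norm_mul, norm_exp_neg_I, one_mul]
  exact prod_norm_le hb t

lemma Wdiff {f₀ hn : ℝ → ℂ} (hint : Integrable f₀ volume)
    (hmeas : AEStronglyMeasurable hn volume) (hb : ∀ x, ‖hn x‖ ≤ 1)
    {M δ : ℝ} (hM0 : 0 ≤ M) (hδ0 : 0 ≤ δ) (hδM : δ * M ≤ 1)
    (hsupp : ∀ t : ℝ, f₀ t ≠ 0 → |t| ≤ M)
    {ξ ξ' : ℝ} (hd : |ξ - ξ'| ≤ δ) :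
    ‖(((Real.sqrt (2 * Real.pi) : ℂ))⁻¹ *
        ∫ t : ℝ, Complex.exp (-(Complex.I * ξ * t)) * (f₀ t * hn t)) -
      (((Real.sqrt (2 * Real.pi) : ℂ))⁻¹ *
        ∫ t : ℝ, Complex.exp (-(Complex.I * ξ' * t)) * (f₀ t * hn t))‖
      ≤ 2 * (δ * M) * ∫ t : ℝ, ‖f₀ t‖ := by
  have hi1 := ker_integrable hint hmeas hb ξ
  have hi2 := ker_integrable hint hmeas hb ξ'
  rw [← mul_sub, ← integral_sub hi1 hi2, norm_mul]
  refine le_trans (mul_le_of_le_one_left (norm_nonneg _) norm_inv_sqrt_le_one) ?_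
  have hbound : ∀ t : ℝ,
      ‖Complex.exp (-(Complex.I * ξ * t)) * (f₀ t * hn t) -
        Complex.exp (-(Complex.I * ξ' * t)) * (f₀ t * hn t)‖
      ≤ 2 * (δ * M) * ‖f₀ t‖ := by
    intro t
    by_cases hf0 : f₀ t = 0
    · simp [hf0]
    · have htM := hsupp t hf0
      rw [← sub_mul, norm_mul]
      have hfactor : Complex.exp (-(Complex.I * ξ * t)) - Complex.exp (-(Complex.I * ξ' * t))
          = Complex.exp (-(Complex.I * ξ' * t)) *
            (Complex.exp (-(Complex.I * (ξ - ξ') * t)) - 1) := by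
        rw [mul_sub, mul_one, ← Complex.exp_add]
        congr 2
        push_cast
        ring
      have hexp : ‖Complex.exp (-(Complex.I * ξ * t)) - Complex.exp (-(Complex.I * ξ' * t))‖
          ≤ 2 * (δ * M) := by
        rw [hfactor, norm_mul, norm_exp_neg_I, one_mul]
        have habs : ‖(-(Complex.I * ((ξ : ℂ) - (ξ' : ℂ)) * (t : ℂ)))‖
            = |ξ - ξ'| * |t| := by
          simp [← Complex.ofReal_sub, Complex.norm_real, abs_neg]
        have h1 : ‖(-(Complex.I * (ξ - ξ') * t))‖ ≤ 1 := by
          rw [habs]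
          calc |ξ - ξ'| * |t| ≤ δ * M :=
                mul_le_mul hd htM (abs_nonneg _) hδ0
            _ ≤ 1 := hδM
        have := Complex.norm_exp_sub_one_le h1
        refine le_trans this ?_
        rw [habs]
        have : |ξ - ξ'| * |t| ≤ δ * M := mul_le_mul hd htM (abs_nonneg _) hδ0
        linarith
      exact mul_le_mul hexp (prod_norm_le hb t) (norm_nonneg _) (by positivity)
  calc ‖∫ t : ℝ, (Complex.exp (-(Complex.I * ξ * t)) * (f₀ t * hn t) -
          Complex.exp (-(Complex.I * ξ' * t)) * (f₀ t * hn t))‖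
      ≤ ∫ t : ℝ, 2 * (δ * M) * ‖f₀ t‖ :=
        norm_integral_le_of_norm_le ((hint.norm).const_mul _) (ae_of_all _ hbound)
    _ = 2 * (δ * M) * ∫ t : ℝ, ‖f₀ t‖ := integral_const_mul _ _



lemma partition_pointwise {N : ℕ} {δ R : ℝ} (hδ : 0 < δ) (hR : (N : ℝ) * δ = R)
    (W : ℝ → ℂ) (v : Fin N → ℂ) {κ : ℝ} (hκ0 : 0 ≤ κ)
    (hnear : ∀ ξ : ℝ, ξ ∈ Set.Ioc (0 : ℝ) R → ∀ k : Fin N,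
      ξ ∈ Set.Ioc ((k : ℝ) * δ) (((k : ℝ) + 1) * δ) → ‖W ξ - v k‖ ≤ κ) :
    ∀ ξ : ℝ, ‖(Set.Ioc (0 : ℝ) R).indicator W ξ -
        ∑ k : Fin N, (Set.Ioc ((k : ℝ) * δ) (((k : ℝ) + 1) * δ)).indicator
          (fun _ => v k) ξ‖
      ≤ ‖(Set.Ioc (0 : ℝ) R).indicator (fun _ => κ) ξ‖ := by
  intro ξ
  have hcell_sub : ∀ k : Fin N,
      Set.Ioc ((k : ℝ) * δ) (((k : ℝ) + 1) * δ) ⊆ Set.Ioc (0 : ℝ) R := by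
    intro k η hη
    obtain ⟨h1, h2⟩ := hη
    constructor
    · have : (0 : ℝ) ≤ (k : ℝ) * δ := mul_nonneg (Nat.cast_nonneg _) hδ.le
      linarith
    · have hk : (k : ℝ) + 1 ≤ (N : ℝ) := by
        have := k.isLt
        exact_mod_cast Nat.succ_le_of_lt this
      have : ((k : ℝ) + 1) * δ ≤ (N : ℝ) * δ := by nlinarith
      linarith [hR ▸ this]
  by_cases hmem : ξ ∈ Set.Ioc (0 : ℝ) R
  · -- find the unique cell
    obtain ⟨hξ0, hξR⟩ := hmem
    set j : ℕ := Nat.ceil (ξ / δ) with hj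
    have hj1 : 1 ≤ j := Nat.one_le_ceil_iff.mpr (div_pos hξ0 hδ)
    have hjN : j ≤ N := by
      refine Nat.ceil_le.mpr ?_
      rw [div_le_iff₀ hδ]
      linarith [hR ▸ hξR]
    set k₀ : Fin N := ⟨j - 1, by omega⟩ with hk₀
    have hk₀c : ((k₀ : ℕ) : ℝ) = (j : ℝ) - 1 := by
      rw [hk₀]
      push_cast [Nat.cast_sub hj1]
      ring
    have hlow : (k₀ : ℝ) * δ < ξ := by
      have h1 : ((j : ℕ) - 1 : ℕ) < Nat.ceil (ξ / δ) := by omega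
      have h2 : (((j - 1 : ℕ) : ℝ)) < ξ / δ := Nat.lt_ceil.mp h1
      calc ((k₀ : ℕ) : ℝ) * δ = ((j - 1 : ℕ) : ℝ) * δ := by rw [hk₀]
        _ < (ξ / δ) * δ := by nlinarith
        _ = ξ := by field_simp
    have hhigh : ξ ≤ ((k₀ : ℝ) + 1) * δ := by
      have h1 : ξ / δ ≤ (j : ℝ) := Nat.le_ceil (ξ / δ)
      have h2 : (k₀ : ℝ) + 1 = (j : ℝ) := by rw [hk₀c]; ring
      rw [h2]
      calc ξ = (ξ / δ) * δ := by field_simp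
        _ ≤ (j : ℝ) * δ := by nlinarith
    have hmem' : ξ ∈ Set.Ioc ((k₀ : ℝ) * δ) (((k₀ : ℝ) + 1) * δ) := ⟨hlow, hhigh⟩
    have hsum : ∑ k : Fin N, (Set.Ioc ((k : ℝ) * δ) (((k : ℝ) + 1) * δ)).indicator
        (fun _ => v k) ξ = v k₀ := by
      rw [Finset.sum_eq_single k₀]
      · rw [Set.indicator_of_mem hmem']
      · intro k _ hk
        refine Set.indicator_of_notMem ?_ _
        intro hc
        obtain ⟨hc1, hc2⟩ := hc
        rcases lt_or_gt_of_ne (fun hcontra : (k : ℕ) = (k₀ : ℕ) => hk (Fin.ext hcontra)) with hlt | hgt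
        · have : ((k : ℕ) : ℝ) + 1 ≤ ((k₀ : ℕ) : ℝ) := by exact_mod_cast Nat.succ_le_of_lt hlt
          nlinarith
        · have : ((k₀ : ℕ) : ℝ) + 1 ≤ ((k : ℕ) : ℝ) := by exact_mod_cast Nat.succ_le_of_lt hgt
          nlinarith
      · intro hc
        exact absurd (Finset.mem_univ k₀) hc
    have hmemIoc : ξ ∈ Set.Ioc (0:ℝ) R := ⟨hξ0, hξR⟩
    rw [hsum, Set.indicator_of_mem hmemIoc, Set.indicator_of_mem hmemIoc,
      Real.norm_eq_abs, _root_.abs_of_nonneg hκ0]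
    exact hnear ξ hmemIoc k₀ hmem'
  · rw [Set.indicator_of_notMem hmem, Set.indicator_of_notMem hmem]
    have hzero : ∑ k : Fin N, (Set.Ioc ((k : ℝ) * δ) (((k : ℝ) + 1) * δ)).indicator
        (fun _ => v k) ξ = 0 := by
      refine Finset.sum_eq_zero fun k _ => ?_
      exact Set.indicator_of_notMem (fun hc => hmem (hcell_sub k hc)) _
    rw [hzero, sub_zero, norm_zero, norm_zero]

lemma elp_coe (y : L2) : eLpNorm (⇑y) 2 volume = ENNReal.ofReal ‖y‖ := by
  rw [Lp.norm_def, ENNReal.ofReal_toReal (Lp.eLpNorm_ne_top y)]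

lemma mod_trans (F : L2 ≃ₗᵢ[ℂ] L2) (hF : IsFourierPlancherel F) (μr : ℝ) (g : L2) :
    F (Mop μr g) = Tr μr (F g) := by
  have key : ∀ ε : ℝ, 0 < ε → ‖F (Mop μr g) - Tr μr (F g)‖ ≤ 2 * ε := by
    intro ε hε
    obtain ⟨φ, φsupp, φclose, φcont, φmem⟩ :=
      (Lp.memLp g).exists_hasCompactSupport_eLpNorm_sub_le (p := 2) ENNReal.ofNat_ne_top
        (ε := ENNReal.ofReal ε) (ENNReal.ofReal_pos.mpr hε).ne'
    set φL : L2 := φmem.toLp φ with hφL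
    have hcoe : ⇑φL =ᵐ[volume] φ := φmem.coeFn_toLp
    have hdist : ‖g - φL‖ ≤ ε := by
      rw [Lp.norm_def]
      have h1 : ⇑(g - φL) =ᵐ[volume] (⇑g - φ) := by
        filter_upwards [Lp.coeFn_sub g φL, hcoe] with x hx h2
        rw [hx, Pi.sub_apply, Pi.sub_apply, h2]
      rw [eLpNorm_congr_ae h1]
      exact ENNReal.toReal_le_of_le_ofReal hε.le φclose
    -- base case
    have φint : Integrable φ volume := φcont.integrable_of_hasCompactSupport φsupp
    have hφLint : Integrable (⇑φL) volume := φint.congr hcoe.symm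
    set Φ : ℝ → ℂ := fun ξ : ℝ => ((Real.sqrt (2 * Real.pi) : ℂ))⁻¹ *
      ∫ t : ℝ, Complex.exp (-(Complex.I * ξ * t)) * φ t with hΦ
    have hFφ : ⇑(F φL) =ᵐ[volume] Φ := by
      refine (hF φL hφLint).trans (Filter.EventuallyEq.of_eq (funext fun ξ => ?_))
      rw [hΦ]
      congr 1
      refine integral_congr_ae ?_
      filter_upwards [hcoe] with t ht
      rw [ht]
    have hMint : Integrable (⇑(Mop μr φL)) volume := by
      refine Integrable.congr ?_ (Mop_coe μr φL).symm
      refine hφLint.bdd_mul ?_ (c := 1) (ae_of_all _ fun x => le_of_eq (norm_exp_I_mul μr x))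
      exact (Complex.continuous_exp.comp (by continuity)).aestronglyMeasurable
    have base : F (Mop μr φL) = Tr μr (F φL) := by
      refine Lp.ext ?_
      have h1 : ⇑(F (Mop μr φL)) =ᵐ[volume] fun ξ => Φ (ξ - μr) := by
        refine (hF (Mop μr φL) hMint).trans ?_
        refine Filter.EventuallyEq.of_eq (funext fun ξ => ?_)
        rw [hΦ]
        simp only []
        congr 1
        have : ∀ᵐ t : ℝ ∂(volume : Measure ℝ),
            Complex.exp (-(Complex.I * ξ * t)) * (Mop μr φL) t
              = Complex.exp (-(Complex.I * (ξ - μr) * t)) * φ t := by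
          filter_upwards [Mop_coe μr φL, hcoe] with t ht h2
          rw [ht, h2, ← mul_assoc, ← Complex.exp_add]
          congr 2
          push_cast
          ring
        rw [integral_congr_ae this]
        norm_cast
      have h2 : ⇑(Tr μr (F φL)) =ᵐ[volume] fun ξ => Φ (ξ - μr) := by
        refine (Tr_coe μr (F φL)).trans ?_
        have h3 := (measurePreserving_add_right (volume : Measure ℝ)
          (-μr)).quasiMeasurePreserving.ae_eq hFφ
        have h4 : ((⇑(F φL)) ∘ fun ξ : ℝ => ξ + (-μr)) =ᵐ[volume]
            (Φ ∘ fun ξ : ℝ => ξ + (-μr)) := h3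
        filter_upwards [h4] with ξ hξ
        simp only [Function.comp_apply, ← sub_eq_add_neg] at hξ
        exact hξ
      exact h1.trans h2.symm
    have e1 : ‖F (Mop μr g) - F (Mop μr φL)‖ ≤ ε := by
      rw [← map_sub, F.norm_map]
      exact (Mop_norm_sub_le μr g φL).trans hdist
    have e2 : ‖Tr μr (F φL) - Tr μr (F g)‖ ≤ ε := by
      refine (Tr_norm_sub_le μr _ _).trans ?_
      rw [← map_sub, F.norm_map, norm_sub_rev]
      exact hdist
    calc ‖F (Mop μr g) - Tr μr (F g)‖
        = ‖(F (Mop μr g) - F (Mop μr φL)) + (F (Mop μr φL) - Tr μr (F g))‖ := by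
          rw [sub_add_sub_cancel]
      _ = ‖(F (Mop μr g) - F (Mop μr φL)) + (Tr μr (F φL) - Tr μr (F g))‖ := by rw [base]
      _ ≤ ‖F (Mop μr g) - F (Mop μr φL)‖ + ‖Tr μr (F φL) - Tr μr (F g)‖ := norm_add_le _ _
      _ ≤ ε + ε := add_le_add e1 e2
      _ = 2 * ε := by ring
  have h0 : ‖F (Mop μr g) - Tr μr (F g)‖ ≤ 0 := by
    refine le_of_forall_pos_le_add fun ε hε => ?_
    have := key (ε / 2) (by linarith)
    linarith
  rw [← sub_eq_zero]
  exact norm_le_zero_iff.mp h0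

lemma tail_small (w : L2) {ε : ℝ} (hε : 0 < ε) :
    ∃ R : ℕ, 1 ≤ R ∧
      eLpNorm ((Set.Ioi (R : ℝ)).indicator (⇑w)) 2 volume ≤ ENNReal.ofReal ε := by
  set G : ℝ → ℝ≥0∞ := fun ξ => (‖w ξ‖₊ : ℝ≥0∞) ^ (2 : ℝ) with hGdef
  have hwmeas : AEMeasurable (⇑w) volume := (Lp.aestronglyMeasurable w).aemeasurable
  have hFn : ∀ n : ℕ, AEMeasurable
      (fun ξ => ((‖(Set.Ioi (n : ℝ)).indicator (⇑w) ξ‖₊ : ℝ≥0∞)) ^ (2 : ℝ)) volume := by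
    intro n
    exact (((hwmeas.indicator measurableSet_Ioi).nnnorm).coe_nnreal_ennreal).pow_const _
  have hGfin : ∫⁻ ξ, G ξ ∂volume ≠ ⊤ := by
    have h1 := Lp.eLpNorm_lt_top w
    rw [eLpNorm_eq_lintegral_rpow_enorm_toReal two_ne_zero ENNReal.ofNat_ne_top] at h1
    simp only [ENNReal.toReal_ofNat] at h1
    have := (ENNReal.rpow_lt_top_iff_of_pos (x := ∫⁻ ξ, (‖w ξ‖₊ : ℝ≥0∞) ^ (2:ℝ) ∂volume)
      (y := 1/2) (by norm_num)).mp ?_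
    · exact this.ne
    · exact h1
  have hlim : Tendsto (fun n : ℕ =>
      ∫⁻ ξ, ((‖(Set.Ioi (n : ℝ)).indicator (⇑w) ξ‖₊ : ℝ≥0∞)) ^ (2 : ℝ) ∂volume)
      atTop (𝓝 0) := by
    have h0 := tendsto_lintegral_of_dominated_convergence' (μ := (volume : Measure ℝ))
      (F := fun n : ℕ => fun ξ => ((‖(Set.Ioi (n : ℝ)).indicator (⇑w) ξ‖₊ : ℝ≥0∞)) ^ (2 : ℝ))
      (f := fun _ => 0) G hFn ?_ hGfin ?_
    · simpa using h0
    · intro n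
      refine ae_of_all _ fun ξ => ?_
      refine ENNReal.rpow_le_rpow ?_ (by norm_num)
      simp only [ENNReal.coe_le_coe]
      by_cases hmem : ξ ∈ Set.Ioi (n : ℝ)
      · rw [Set.indicator_of_mem hmem]
      · rw [Set.indicator_of_notMem hmem]; simp
    · refine ae_of_all _ fun ξ => ?_
      have : (fun n : ℕ => ((‖(Set.Ioi (n : ℝ)).indicator (⇑w) ξ‖₊ : ℝ≥0∞)) ^ (2 : ℝ))
          =ᶠ[atTop] (fun _ => (0:ℝ≥0∞)) := by
        filter_upwards [eventually_ge_atTop (Nat.ceil ξ)] with n hn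
        have : ξ ∉ Set.Ioi (n : ℝ) := by
          simp only [Set.mem_Ioi, not_lt]
          exact le_trans (Nat.le_ceil ξ) (by exact_mod_cast hn)
        rw [Set.indicator_of_notMem this]
        simp
      exact Tendsto.congr' this.symm (by simpa using tendsto_const_nhds)
  have hpos : (0 : ℝ≥0∞) < (ENNReal.ofReal ε) ^ (2 : ℝ) :=
    ENNReal.rpow_pos (ENNReal.ofReal_pos.mpr hε) (by simp)
  obtain ⟨n, hn1, hn2⟩ := ((hlim.eventually_lt_const hpos).and (eventually_ge_atTop 1)).exists
  refine ⟨n, hn2, ?_⟩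
  rw [eLpNorm_eq_lintegral_rpow_enorm_toReal two_ne_zero ENNReal.ofNat_ne_top]
  simp only [ENNReal.toReal_ofNat]
  calc (∫⁻ ξ, ((‖(Set.Ioi (n : ℝ)).indicator (⇑w) ξ‖₊ : ℝ≥0∞)) ^ (2:ℝ) ∂volume) ^ (1/(2:ℝ))
      ≤ ((ENNReal.ofReal ε) ^ (2:ℝ)) ^ (1/(2:ℝ)) := ENNReal.rpow_le_rpow hn1.le (by norm_num)
    _ = ENNReal.ofReal ε := by
        rw [← ENNReal.rpow_mul]
        norm_num

end HankelAux

set_option maxHeartbeats 1000000 in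
/-- Compactness of the Hankel-type operator `H_f(h) = P₊(f h)`:
if `f ∈ L²₊(ℝ)` and `(hₙ)` are trigonometric polynomials with nonpositive
frequencies and `‖hₙ‖_∞ ≤ 1`, then some subsequence of `P₊(f hₙ)` converges
in `L²` norm. -/
theorem hankel_compact
    (F : Lp ℂ 2 (volume : Measure ℝ) ≃ₗᵢ[ℂ] Lp ℂ 2 (volume : Measure ℝ))
    (hF : IsFourierPlancherel F)
    (f : Lp ℂ 2 (volume : Measure ℝ))
    (hfplus : ∀ᵐ ξ ∂(volume : Measure ℝ), ξ < 0 → (F f) ξ = 0)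
    (h : ℕ → ℝ → ℂ)
    (hpoly : ∀ n : ℕ, ∃ (m : ℕ) (c : Fin m → ℂ) (lam : Fin m → ℝ),
      (∀ k, lam k ≤ 0) ∧
        ∀ x : ℝ, h n x = ∑ k, c k * Complex.exp (Complex.I * (lam k : ℂ) * (x : ℂ)))
    (hbd : ∀ n x, ‖h n x‖ ≤ 1)
    (fh : ℕ → Lp ℂ 2 (volume : Measure ℝ))
    (hfh : ∀ n, (⇑(fh n)) =ᵐ[volume] fun x : ℝ => f x * h n x)
    (Hf : ℕ → Lp ℂ 2 (volume : Measure ℝ))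
    (hHf : ∀ n, (⇑(F (Hf n))) =ᵐ[volume] Set.indicator (Set.Ioi (0 : ℝ)) (⇑(F (fh n)))) :
    ∃ φ : ℕ → ℕ, StrictMono φ ∧
      ∃ g : Lp ℂ 2 (volume : Measure ℝ), Tendsto (fun j => Hf (φ j)) atTop (nhds g) := by
  classical
  -- it suffices to prove total boundedness of the range of `n ↦ F (Hf n)`
  suffices TB : TotallyBounded (Set.range fun n => F (Hf n)) by
    have hcl : IsCompact (closure (Set.range fun n => F (Hf n))) :=
      TB.closure.isCompact_of_isClosed isClosed_closure
    obtain ⟨a, -, φ, hφ, hconv⟩ := hcl.tendsto_subseq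
      (x := fun n => F (Hf n)) (fun n => subset_closure ⟨n, rfl⟩)
    refine ⟨φ, hφ, F.symm a, ?_⟩
    have heq : (fun j => Hf (φ j)) = fun j => F.symm (F (Hf (φ j))) := by
      funext j
      rw [LinearIsometryEquiv.symm_apply_apply]
    rw [heq]
    exact (F.symm.continuous.tendsto a).comp hconv
  rw [Metric.totallyBounded_iff]
  intro ε hε
  set ε' : ℝ := ε / 5 with hε'def
  have hε' : 0 < ε' := by positivity
  -- approximate f by a continuous compactly supported function
  obtain ⟨f₀, f₀supp, f₀close, f₀cont, f₀mem⟩ :=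
    (Lp.memLp f).exists_hasCompactSupport_eLpNorm_sub_le (p := 2) ENNReal.ofNat_ne_top
      (ε := ENNReal.ofReal ε') (ENNReal.ofReal_pos.mpr hε').ne'
  -- data of the trigonometric polynomials
  choose m c lam hP using hpoly
  have hcont : ∀ n, Continuous (h n) := by
    intro n
    have : h n = fun x : ℝ => ∑ k, c n k * Complex.exp (Complex.I * (lam n k : ℂ) * (x : ℂ)) :=
      funext (hP n).2
    rw [this]
    refine continuous_finset_sum _ fun k _ => continuous_const.mul ?_
    exact Complex.continuous_exp.comp
      ((continuous_const.mul Complex.continuous_ofReal))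
  have hprod_le : ∀ (g : ℝ → ℂ) (n : ℕ),
      eLpNorm (fun x => g x * h n x) 2 volume ≤ eLpNorm g 2 volume := by
    intro g n
    refine eLpNorm_mono_ae (ae_of_all _ fun x => ?_)
    exact HankelAux.prod_norm_le (hbd n) x
  -- support radius M
  obtain ⟨M0, hM0⟩ := f₀supp.isBounded.subset_closedBall (0 : ℝ)
  set M : ℝ := max M0 1 with hMdef
  have hM1 : (1 : ℝ) ≤ M := le_max_right _ _
  have hM0' : (0 : ℝ) ≤ M := by linarith
  have htM : ∀ t : ℝ, f₀ t ≠ 0 → |t| ≤ M := by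
    intro t ht
    have h1 : t ∈ tsupport f₀ := subset_tsupport _ ht
    have h2 := hM0 h1
    rw [Metric.mem_closedBall, Real.dist_eq, sub_zero] at h2
    exact h2.trans (le_max_left _ _)
  have f₀int : Integrable f₀ volume := f₀cont.integrable_of_hasCompactSupport f₀supp
  set I1 : ℝ := ∫ t : ℝ, ‖f₀ t‖ ∂volume with hI1def
  have hI1 : 0 ≤ I1 := integral_nonneg fun t => norm_nonneg _
  -- Fourier transform of f₀ and tail cutoff
  set f₀L : Lp ℂ 2 (volume : Measure ℝ) := f₀mem.toLp f₀ with hf₀Ldef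
  set w : Lp ℂ 2 (volume : Measure ℝ) := F f₀L with hwdef
  obtain ⟨R, hR1, hRtail⟩ := HankelAux.tail_small w hε'
  have hRpos : (0 : ℝ) < R := by exact_mod_cast Nat.lt_of_lt_of_le Nat.zero_lt_one hR1
  set sR : ℝ := Real.sqrt R with hsRdef
  have hsR0 : 0 < sR := Real.sqrt_pos.mpr hRpos
  set ε2 : ℝ := ε' / (sR + 1) with hε2def
  have hε2 : 0 < ε2 := by positivity
  -- choice of the grid
  obtain ⟨N, hNgt⟩ := exists_nat_gt ((R : ℝ) * M + 2 * R * M * I1 * sR / ε' + 1)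
  have hq1 : (0:ℝ) ≤ (R : ℝ) * M := by positivity
  have hq2 : (0:ℝ) ≤ 2 * R * M * I1 * sR / ε' := by positivity
  have hNpos : (0 : ℝ) < N := by linarith
  set δ : ℝ := (R : ℝ) / N with hδdef
  have hδpos : 0 < δ := by positivity
  have hNδ : (N : ℝ) * δ = R := by
    rw [hδdef]
    field_simp
  have hδM : δ * M ≤ 1 := by
    rw [hδdef, div_mul_eq_mul_div, div_le_one hNpos]
    linarith
  have h2δ : 2 * (δ * M) * I1 * sR ≤ ε' := by
    have hkey : 2 * R * M * I1 * sR / ε' < N := by linarith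
    have h3 : 2 * R * M * I1 * sR < ε' * N := by
      have := (div_lt_iff₀ hε').mp hkey
      linarith [this]
    have h4 : 2 * (δ * M) * I1 * sR = 2 * R * M * I1 * sR / N := by
      rw [hδdef]
      ring
    rw [h4, div_le_iff₀ hNpos]
    linarith
  -- finite net of the disc of radius I1
  have hnet : ∃ D : Finset ℂ, ∀ z : ℂ, ‖z‖ ≤ I1 → ∃ d ∈ D, ‖z - d‖ ≤ ε2 := by
    have h1 := (isCompact_closedBall (0 : ℂ) I1).totallyBounded
    obtain ⟨t, htfin, htcover⟩ := Metric.totallyBounded_iff.mp h1 ε2 hε2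
    refine ⟨htfin.toFinset, fun z hz => ?_⟩
    have hz' : z ∈ Metric.closedBall (0 : ℂ) I1 := by
      rw [Metric.mem_closedBall, dist_zero_right]; exact hz
    obtain ⟨d, hd, hdz⟩ := Set.mem_iUnion₂.mp (htcover hz')
    refine ⟨d, htfin.mem_toFinset.mpr hd, ?_⟩
    rw [← dist_eq_norm]
    exact (Metric.mem_ball.mp hdz).le
  obtain ⟨D, hD⟩ := hnet
  -- products with h n stay in L²
  have memprod : ∀ (g : ℝ → ℂ), MemLp g 2 volume → ∀ n,
      MemLp (fun x => g x * h n x) 2 volume := by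
    intro g hg n
    refine MemLp.of_le hg (hg.aestronglyMeasurable.mul (hcont n).aestronglyMeasurable)
      (ae_of_all _ fun x => ?_)
    exact HankelAux.prod_norm_le (hbd n) x
  -- the modulated sums
  have SMcoe : ∀ (n : ℕ) (g : Lp ℂ 2 (volume : Measure ℝ)),
      ⇑(∑ k : Fin (m n), c n k • HankelAux.Mop (lam n k) g) =ᵐ[volume]
        fun x => g x * h n x := by
    intro n g
    refine (HankelAux.coeFn_finset_sum Finset.univ
      (fun k => c n k • HankelAux.Mop (lam n k) g)).trans ?_
    have h2 : ∀ k ∈ (Finset.univ : Finset (Fin (m n))),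
        ⇑(c n k • HankelAux.Mop (lam n k) g) =ᵐ[volume]
          fun x => c n k * (Complex.exp (Complex.I * (lam n k) * x) * g x) := by
      intro k _
      filter_upwards [Lp.coeFn_smul (c n k) (HankelAux.Mop (lam n k) g),
        HankelAux.Mop_coe (lam n k) g] with x h3 h4
      rw [h3, Pi.smul_apply, h4, smul_eq_mul]
    refine (HankelAux.ae_eq_finset_sum Finset.univ _ _ h2).trans ?_
    refine Filter.EventuallyEq.of_eq (funext fun x => ?_)
    rw [(hP n).2 x, Finset.mul_sum]
    exact Finset.sum_congr rfl fun k _ => by ring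
  -- spectral splitting of f₀ at frequency R
  set aW : ℝ → ℂ := (Set.Iic (R : ℝ)).indicator ⇑w with haWdef
  set bW : ℝ → ℂ := (Set.Ioi (R : ℝ)).indicator ⇑w with hbWdef
  have aMem : MemLp aW 2 volume := (Lp.memLp w).indicator measurableSet_Iic
  have bMem : MemLp bW 2 volume := (Lp.memLp w).indicator measurableSet_Ioi
  set aF : Lp ℂ 2 (volume : Measure ℝ) := aMem.toLp _ with haFdef
  set bF : Lp ℂ 2 (volume : Measure ℝ) := bMem.toLp _ with hbFdef
  have habF : aF + bF = w := by
    refine Lp.ext ?_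
    filter_upwards [Lp.coeFn_add aF bF, aMem.coeFn_toLp, bMem.coeFn_toLp] with ξ h1 h2 h3
    rw [h1, Pi.add_apply, h2, h3]
    by_cases hle : ξ ≤ (R : ℝ)
    · rw [haWdef, hbWdef, Set.indicator_of_mem (Set.mem_Iic.mpr hle),
        Set.indicator_of_notMem (by simp [Set.mem_Ioi]; exact hle), add_zero]
    · rw [haWdef, hbWdef, Set.indicator_of_notMem (by simpa [Set.mem_Iic] using hle),
        Set.indicator_of_mem (Set.mem_Ioi.mpr (not_le.mp hle)), zero_add]
  set aL : Lp ℂ 2 (volume : Measure ℝ) := F.symm aF with haLdef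
  set bL : Lp ℂ 2 (volume : Measure ℝ) := F.symm bF with hbLdef
  have habL : aL + bL = f₀L := by
    rw [haLdef, hbLdef, ← map_add, habF, hwdef, LinearIsometryEquiv.symm_apply_apply]
  -- the pieces
  set An : ℕ → Lp ℂ 2 (volume : Measure ℝ) :=
    fun n => ∑ k : Fin (m n), c n k • HankelAux.Mop (lam n k) aL with hAndef
  set Bn : ℕ → Lp ℂ 2 (volume : Measure ℝ) :=
    fun n => ∑ k : Fin (m n), c n k • HankelAux.Mop (lam n k) bL with hBndef
  have Pmem : ∀ n, MemLp (fun x => f₀ x * h n x) 2 volume := fun n => memprod f₀ f₀mem n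
  set Pn : ℕ → Lp ℂ 2 (volume : Measure ℝ) := fun n => (Pmem n).toLp _ with hPndef
  have hPab : ∀ n, An n + Bn n = Pn n := by
    intro n
    have habpt : (fun x : ℝ => aL x + bL x) =ᵐ[volume] f₀ := by
      filter_upwards [Lp.coeFn_add aL bL, f₀mem.coeFn_toLp] with x h1 h2
      have h3 : aL x + bL x = (⇑(aL + bL)) x := by rw [h1, Pi.add_apply]
      rw [h3, habL, h2]
    refine Lp.ext ?_
    filter_upwards [Lp.coeFn_add (An n) (Bn n), SMcoe n aL, SMcoe n bL,
      (Pmem n).coeFn_toLp, habpt] with x h1 h2 h3 h4 h5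
    rw [h1, Pi.add_apply, h2, h3, h4, ← add_mul, h5]
  -- F (An n) vanishes beyond R
  have hAvanish : ∀ n, ∀ᵐ ξ ∂(volume : Measure ℝ),
      ξ ∈ Set.Ioi (R : ℝ) → (⇑(F (An n))) ξ = 0 := by
    intro n
    have h1 : F (An n) = ∑ k : Fin (m n), c n k • (HankelAux.Tr (lam n k)) aF := by
      rw [hAndef]
      rw [map_sum]
      refine Finset.sum_congr rfl fun k _ => ?_
      rw [_root_.map_smul, HankelAux.mod_trans F hF (lam n k) aL, haLdef,
        LinearIsometryEquiv.apply_symm_apply]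
    have hterm : ∀ k : Fin (m n), ⇑(c n k • (HankelAux.Tr (lam n k)) aF) =ᵐ[volume]
        fun ξ => c n k * aW (ξ - lam n k) := by
      intro k
      have hcomp : (⇑aF ∘ fun ξ : ℝ => ξ + (-(lam n k))) =ᵐ[volume]
          (aW ∘ fun ξ : ℝ => ξ + (-(lam n k))) :=
        (measurePreserving_add_right volume
          (-(lam n k))).quasiMeasurePreserving.ae_eq aMem.coeFn_toLp
      filter_upwards [Lp.coeFn_smul (c n k) ((HankelAux.Tr (lam n k)) aF),
        HankelAux.Tr_coe (lam n k) aF, hcomp] with ξ h2 h3 h4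
      have h6 := h4
      simp only [Function.comp_apply] at h6
      rw [h2, Pi.smul_apply, h3, smul_eq_mul,
        show ξ - lam n k = ξ + -(lam n k) from by ring, h6]
    have h2 : ⇑(F (An n)) =ᵐ[volume] fun ξ => ∑ k : Fin (m n), c n k * aW (ξ - lam n k) := by
      rw [h1]
      refine (HankelAux.coeFn_finset_sum Finset.univ _).trans ?_
      exact HankelAux.ae_eq_finset_sum Finset.univ _ _ fun k _ => hterm k
    filter_upwards [h2] with ξ h3 hmem
    rw [h3]
    refine Finset.sum_eq_zero fun k _ => ?_
    have h6 : ξ - lam n k ∉ Set.Iic (R : ℝ) := by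
      simp only [Set.mem_Iic, not_le]
      have := (hP n).1 k
      have h7 : (R : ℝ) < ξ := hmem
      linarith
    rw [haWdef, Set.indicator_of_notMem h6, mul_zero]
  -- kernel function
  set Wf : ℕ → ℝ → ℂ := fun n ξ => ((Real.sqrt (2 * Real.pi) : ℂ))⁻¹ *
    ∫ t : ℝ, Complex.exp (-(Complex.I * ξ * t)) * (f₀ t * h n t) with hWfdef
  have hPint : ∀ n, Integrable (fun x => f₀ x * h n x) volume := by
    intro n
    refine (Integrable.bdd_mul f₀int (hcont n).aestronglyMeasurable (c := 1) (ae_of_all _ (hbd n))).congr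
      (ae_of_all _ fun x => mul_comm _ _)
  have hPLint : ∀ n, Integrable (⇑(Pn n)) volume := fun n =>
    (hPint n).congr ((Pmem n).coeFn_toLp).symm
  have hFP : ∀ n, ⇑(F (Pn n)) =ᵐ[volume] Wf n := by
    intro n
    refine (hF (Pn n) (hPLint n)).trans (Filter.EventuallyEq.of_eq (funext fun ξ => ?_))
    rw [hWfdef]
    simp only []
    congr 1
    refine integral_congr_ae ?_
    filter_upwards [(Pmem n).coeFn_toLp] with t ht
    rw [ht]
  have hWbd : ∀ n ξ, ‖Wf n ξ‖ ≤ I1 := fun n ξ =>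
    HankelAux.Wbd f₀int (hcont n).aestronglyMeasurable (hbd n) ξ
  have hWdiff : ∀ n (ξ ξ' : ℝ), |ξ - ξ'| ≤ δ → ‖Wf n ξ - Wf n ξ'‖ ≤ 2 * (δ * M) * I1 :=
    fun n ξ ξ' hd =>
      HankelAux.Wdiff f₀int (hcont n).aestronglyMeasurable (hbd n) hM0' hδpos.le hδM htM hd
  -- tail norm bound for Bn
  have hBnorm : ∀ n, eLpNorm (⇑(F (Bn n))) 2 volume ≤ ENNReal.ofReal ε' := by
    intro n
    calc eLpNorm (⇑(F (Bn n))) 2 volume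
        = ENNReal.ofReal ‖F (Bn n)‖ := HankelAux.elp_coe _
      _ = ENNReal.ofReal ‖Bn n‖ := by rw [F.norm_map]
      _ = eLpNorm (⇑(Bn n)) 2 volume := (HankelAux.elp_coe _).symm
      _ = eLpNorm (fun x => bL x * h n x) 2 volume := eLpNorm_congr_ae (SMcoe n bL)
      _ ≤ eLpNorm (⇑bL) 2 volume := hprod_le _ n
      _ = ENNReal.ofReal ‖bL‖ := HankelAux.elp_coe _
      _ = ENNReal.ofReal ‖bF‖ := by rw [hbLdef, LinearIsometryEquiv.norm_map]
      _ = eLpNorm (⇑bF) 2 volume := (HankelAux.elp_coe _).symm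
      _ = eLpNorm bW 2 volume := eLpNorm_congr_ae bMem.coeFn_toLp
      _ ≤ ENNReal.ofReal ε' := hRtail
  -- net values
  have hvex : ∀ n, ∃ v : Fin N → ℂ, ∀ k, v k ∈ D ∧ ‖Wf n ((k : ℝ) * δ) - v k‖ ≤ ε2 := by
    intro n
    choose d hd1 hd2 using fun k : Fin N => hD (Wf n ((k : ℝ) * δ)) (hWbd n _)
    exact ⟨d, fun k => ⟨hd1 k, hd2 k⟩⟩
  choose v hv using hvex
  -- centers
  have hcellfin : ∀ k : Fin N,
      volume (Set.Ioc ((k : ℝ) * δ) (((k : ℝ) + 1) * δ)) ≠ ⊤ := fun k =>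
    measure_Ioc_lt_top.ne
  set cen : (Fin N → ℂ) → Lp ℂ 2 (volume : Measure ℝ) := fun vv =>
    ∑ k : Fin N, indicatorConstLp 2 measurableSet_Ioc (hcellfin k) (vv k) with hcendef
  refine ⟨Set.range (fun vv : Fin N → {d : ℂ // d ∈ D} => cen (fun k => (vv k : ℂ))),
    Set.finite_range _, ?_⟩
  rintro y ⟨n, rfl⟩
  set κ : ℝ := 2 * (δ * M) * I1 + ε2 with hκdef
  have hκ0 : 0 ≤ κ := by positivity
  -- the distance bound
  have hX4ae : ⇑(cen (v n)) =ᵐ[volume] fun ξ => ∑ k : Fin N,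
      (Set.Ioc ((k : ℝ) * δ) (((k : ℝ) + 1) * δ)).indicator (fun _ => v n k) ξ := by
    rw [hcendef]
    refine (HankelAux.coeFn_finset_sum Finset.univ _).trans ?_
    exact HankelAux.ae_eq_finset_sum Finset.univ _ _ fun k _ => indicatorConstLp_coeFn
  have E1 : eLpNorm (fun ξ => (Set.Ioi (0:ℝ)).indicator (⇑(F (fh n))) ξ -
      (Set.Ioi (0:ℝ)).indicator (⇑(F (Pn n))) ξ) 2 volume ≤ ENNReal.ofReal ε' := by
    calc eLpNorm (fun ξ => (Set.Ioi (0:ℝ)).indicator (⇑(F (fh n))) ξ -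
          (Set.Ioi (0:ℝ)).indicator (⇑(F (Pn n))) ξ) 2 volume
        = eLpNorm ((Set.Ioi (0:ℝ)).indicator
            (fun ξ => (F (fh n)) ξ - (F (Pn n)) ξ)) 2 volume := by
          rw [Set.indicator_sub]
      _ ≤ eLpNorm (fun ξ => (F (fh n)) ξ - (F (Pn n)) ξ) 2 volume :=
          eLpNorm_indicator_le _
      _ = eLpNorm (⇑(F (fh n) - F (Pn n))) 2 volume :=
          eLpNorm_congr_ae (Lp.coeFn_sub _ _).symm
      _ = ENNReal.ofReal ‖F (fh n) - F (Pn n)‖ := HankelAux.elp_coe _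
      _ = ENNReal.ofReal ‖fh n - Pn n‖ := by rw [← map_sub, F.norm_map]
      _ = eLpNorm (⇑(fh n - Pn n)) 2 volume := (HankelAux.elp_coe _).symm
      _ = eLpNorm (fun x => (f x - f₀ x) * h n x) 2 volume := by
          refine eLpNorm_congr_ae ?_
          filter_upwards [Lp.coeFn_sub (fh n) (Pn n), hfh n, (Pmem n).coeFn_toLp]
            with x h1 h2 h3
          rw [h1, Pi.sub_apply, h2, h3]
          ring
      _ ≤ eLpNorm (fun x => f x - f₀ x) 2 volume := hprod_le _ n
      _ ≤ ENNReal.ofReal ε' := f₀close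
  have E2 : eLpNorm (fun ξ => (Set.Ioi (0:ℝ)).indicator (⇑(F (Pn n))) ξ -
      (Set.Ioc (0:ℝ) R).indicator (⇑(F (Pn n))) ξ) 2 volume ≤ ENNReal.ofReal ε' := by
    have hpt : (fun ξ => (Set.Ioi (0:ℝ)).indicator (⇑(F (Pn n))) ξ -
        (Set.Ioc (0:ℝ) R).indicator (⇑(F (Pn n))) ξ)
        = (Set.Ioi (R:ℝ)).indicator (⇑(F (Pn n))) := by
      funext ξ
      by_cases hξR : (R:ℝ) < ξ
      · have h0 : (0:ℝ) < ξ := lt_trans hRpos hξR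
        have hnotIoc : ξ ∉ Set.Ioc (0:ℝ) (R:ℝ) := fun hc => absurd hc.2 (not_le.mpr hξR)
        rw [Set.indicator_of_mem (Set.mem_Ioi.mpr h0),
          Set.indicator_of_notMem hnotIoc,
          Set.indicator_of_mem (Set.mem_Ioi.mpr hξR), sub_zero]
      · have hnotR : ξ ∉ Set.Ioi (R:ℝ) := by simpa [Set.mem_Ioi] using hξR
        rw [Set.indicator_of_notMem hnotR]
        by_cases h0 : (0:ℝ) < ξ
        · rw [Set.indicator_of_mem (Set.mem_Ioi.mpr h0),
            Set.indicator_of_mem (Set.mem_Ioc.mpr ⟨h0, not_lt.mp hξR⟩), sub_self]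
        · have hnot0 : ξ ∉ Set.Ioi (0:ℝ) := by simpa [Set.mem_Ioi] using h0
          have hnotIoc : ξ ∉ Set.Ioc (0:ℝ) (R:ℝ) := fun hc => h0 hc.1
          rw [Set.indicator_of_notMem hnot0, Set.indicator_of_notMem hnotIoc, sub_self]
    rw [hpt]
    have hsplitP : ⇑(F (Pn n)) =ᵐ[volume] fun ξ => (F (An n)) ξ + (F (Bn n)) ξ := by
      rw [← hPab n, map_add]
      exact Lp.coeFn_add _ _
    have hae : (Set.Ioi (R:ℝ)).indicator (⇑(F (Pn n))) =ᵐ[volume]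
        (Set.Ioi (R:ℝ)).indicator (⇑(F (Bn n))) := by
      filter_upwards [hsplitP, hAvanish n] with ξ h1 h2
      by_cases hmem : ξ ∈ Set.Ioi (R:ℝ)
      · rw [Set.indicator_of_mem hmem, Set.indicator_of_mem hmem, h1, h2 hmem, zero_add]
      · rw [Set.indicator_of_notMem hmem, Set.indicator_of_notMem hmem]
    calc eLpNorm ((Set.Ioi (R:ℝ)).indicator (⇑(F (Pn n)))) 2 volume
        = eLpNorm ((Set.Ioi (R:ℝ)).indicator (⇑(F (Bn n)))) 2 volume := eLpNorm_congr_ae hae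
      _ ≤ eLpNorm (⇑(F (Bn n))) 2 volume := eLpNorm_indicator_le _
      _ ≤ ENNReal.ofReal ε' := hBnorm n
  have E3 : eLpNorm (fun ξ => (Set.Ioc (0:ℝ) R).indicator (⇑(F (Pn n))) ξ -
      (⇑(cen (v n))) ξ) 2 volume ≤ ENNReal.ofReal (2 * ε') := by
    have hX3ae : ∀ᵐ ξ ∂(volume : Measure ℝ),
        (Set.Ioc (0:ℝ) R).indicator (⇑(F (Pn n))) ξ = (Set.Ioc (0:ℝ) R).indicator (Wf n) ξ := by
      filter_upwards [hFP n] with ξ h1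
      by_cases hmem : ξ ∈ Set.Ioc (0:ℝ) (R:ℝ)
      · rw [Set.indicator_of_mem hmem, Set.indicator_of_mem hmem, h1]
      · rw [Set.indicator_of_notMem hmem, Set.indicator_of_notMem hmem]
    have hnear : ∀ ξ : ℝ, ξ ∈ Set.Ioc (0:ℝ) (R:ℝ) → ∀ k : Fin N,
        ξ ∈ Set.Ioc ((k:ℝ) * δ) (((k:ℝ) + 1) * δ) → ‖Wf n ξ - v n k‖ ≤ κ := by
      intro ξ _ k hcell
      have hdist : |ξ - (k:ℝ) * δ| ≤ δ := by
        obtain ⟨h1, h2⟩ := hcell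
        rw [abs_of_pos (by linarith)]
        nlinarith [h2]
      calc ‖Wf n ξ - v n k‖
          ≤ ‖Wf n ξ - Wf n ((k:ℝ) * δ)‖ + ‖Wf n ((k:ℝ) * δ) - v n k‖ := by
            simpa [dist_eq_norm] using dist_triangle (Wf n ξ) (Wf n ((k:ℝ) * δ)) (v n k)
        _ ≤ 2 * (δ * M) * I1 + ε2 := add_le_add (hWdiff n ξ _ hdist) (hv n k).2
        _ = κ := by rw [hκdef]
    have hptw := HankelAux.partition_pointwise hδpos hNδ (Wf n) (v n) hκ0 hnear
    calc eLpNorm (fun ξ => (Set.Ioc (0:ℝ) R).indicator (⇑(F (Pn n))) ξ -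
          (⇑(cen (v n))) ξ) 2 volume
        = eLpNorm (fun ξ => (Set.Ioc (0:ℝ) (R:ℝ)).indicator (Wf n) ξ -
            ∑ k : Fin N, (Set.Ioc ((k:ℝ) * δ) (((k:ℝ) + 1) * δ)).indicator
              (fun _ => v n k) ξ) 2 volume := by
          refine eLpNorm_congr_ae ?_
          filter_upwards [hX3ae, hX4ae] with ξ h1 h2
          rw [h1, h2]
      _ ≤ eLpNorm ((Set.Ioc (0:ℝ) (R:ℝ)).indicator (fun _ => κ)) 2 volume := by
          refine eLpNorm_mono_ae (ae_of_all _ fun ξ => ?_)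
          exact hptw ξ
      _ ≤ ENNReal.ofReal (2 * ε') := by
          rw [eLpNorm_indicator_const measurableSet_Ioc two_ne_zero ENNReal.ofNat_ne_top]
          have hv1 : volume (Set.Ioc (0:ℝ) (R:ℝ)) = ENNReal.ofReal R := by
            rw [Real.volume_Ioc, sub_zero]
          have h2' : (1 / (2:ℝ≥0∞).toReal) = (1/2 : ℝ) := by simp
          rw [hv1, h2', Real.enorm_eq_ofReal hκ0,
            ENNReal.ofReal_rpow_of_pos hRpos, ← Real.sqrt_eq_rpow,
            ← ENNReal.ofReal_mul hκ0]
          refine ENNReal.ofReal_le_ofReal ?_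
          have hε2sR : ε2 * sR ≤ ε' := by
            rw [hε2def, div_mul_eq_mul_div, div_le_iff₀ (by linarith)]
            nlinarith
          have hκs : κ * sR = 2 * (δ * M) * I1 * sR + ε2 * sR := by rw [hκdef]; ring
          rw [hsRdef] at hκs
          rw [show Real.sqrt (R:ℝ) = sR from hsRdef.symm]
          linarith [h2δ, hε2sR, hκs]
  have hdistb : dist (F (Hf n)) (cen (v n)) ≤ 4 * ε' := by
    rw [Lp.dist_def]
    have hdec : (⇑(F (Hf n)) - ⇑(cen (v n))) =ᵐ[volume]
        (fun ξ => (Set.Ioi (0:ℝ)).indicator (⇑(F (fh n))) ξ -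
          (Set.Ioi (0:ℝ)).indicator (⇑(F (Pn n))) ξ)
        + ((fun ξ => (Set.Ioi (0:ℝ)).indicator (⇑(F (Pn n))) ξ -
            (Set.Ioc (0:ℝ) R).indicator (⇑(F (Pn n))) ξ)
          + (fun ξ => (Set.Ioc (0:ℝ) R).indicator (⇑(F (Pn n))) ξ - (⇑(cen (v n))) ξ)) := by
      filter_upwards [hHf n] with ξ h1
      simp only [Pi.add_apply, Pi.sub_apply]
      rw [h1]
      ring
    have m1 : AEStronglyMeasurable (fun ξ => (Set.Ioi (0:ℝ)).indicator (⇑(F (fh n))) ξ -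
        (Set.Ioi (0:ℝ)).indicator (⇑(F (Pn n))) ξ) volume :=
      ((Lp.aestronglyMeasurable (F (fh n))).indicator measurableSet_Ioi).sub
        ((Lp.aestronglyMeasurable (F (Pn n))).indicator measurableSet_Ioi)
    have m2 : AEStronglyMeasurable (fun ξ => (Set.Ioi (0:ℝ)).indicator (⇑(F (Pn n))) ξ -
        (Set.Ioc (0:ℝ) R).indicator (⇑(F (Pn n))) ξ) volume :=
      ((Lp.aestronglyMeasurable (F (Pn n))).indicator measurableSet_Ioi).sub
        ((Lp.aestronglyMeasurable (F (Pn n))).indicator measurableSet_Ioc)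
    have m3 : AEStronglyMeasurable (fun ξ => (Set.Ioc (0:ℝ) R).indicator (⇑(F (Pn n))) ξ -
        (⇑(cen (v n))) ξ) volume :=
      ((Lp.aestronglyMeasurable (F (Pn n))).indicator measurableSet_Ioc).sub
        (Lp.aestronglyMeasurable (cen (v n)))
    have hsum : eLpNorm (⇑(F (Hf n)) - ⇑(cen (v n))) 2 volume ≤
        ENNReal.ofReal ε' + (ENNReal.ofReal ε' + ENNReal.ofReal (2 * ε')) := by
      rw [eLpNorm_congr_ae hdec]
      refine le_trans (eLpNorm_add_le m1 (m2.add m3) one_le_two) ?_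
      refine add_le_add E1 ?_
      exact le_trans (eLpNorm_add_le m2 m3 one_le_two) (add_le_add E2 E3)
    have hsum2 : ENNReal.ofReal ε' + (ENNReal.ofReal ε' + ENNReal.ofReal (2 * ε'))
        = ENNReal.ofReal (4 * ε') := by
      rw [← ENNReal.ofReal_add hε'.le (by positivity),
        ← ENNReal.ofReal_add hε'.le (by positivity),
        show ε' + (ε' + 2 * ε') = 4 * ε' from by ring]
    rw [hsum2] at hsum
    exact ENNReal.toReal_le_of_le_ofReal (by positivity) hsum
  have hmem : F (Hf n) ∈ Metric.ball (cen (v n)) ε := by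
    rw [Metric.mem_ball]
    have : 4 * ε' < ε := by rw [hε'def]; linarith
    linarith [hdistb]
  exact Set.mem_biUnion ⟨fun k => ⟨v n k, (hv n k).1⟩, rfl⟩ hmem

end
end

section
/- Let f, g ∈ L²₊(ℝ) (boundary values of Hardy space H² functions on the upper half-plane). Then the product f·g ∈ L¹(ℝ) has Fourier transform vanishing on (−∞, 0); i.e., ∫ f(x)g(x)e^{−iξx} dx = 0 for all ξ < 0. -/
open MeasureTheory Complex Filter

open scoped ENNReal

noncomputable section

local notation "μ" => (volume : Measure ℝ)
local notation "𝕔" => ((Real.sqrt (2 * Real.pi) : ℂ))⁻¹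

lemma memA (g : Lp ℂ 2 μ) (ξ : ℝ) :
    MemLp (fun t : ℝ => (starRingEnd ℂ) (g t) * Complex.exp (Complex.I * ξ * t)) 2 μ := by
  refine MemLp.of_le (Lp.memLp g) ?_ (Eventually.of_forall fun t => ?_)
  · exact (Complex.continuous_conj.comp_aestronglyMeasurable (Lp.aestronglyMeasurable g)).mul
      ((Complex.continuous_exp.comp (by continuity)).aestronglyMeasurable)
  · simp [Complex.norm_exp]

lemma memW (u : Lp ℂ 2 μ) (ξ : ℝ) :
    MemLp (fun η : ℝ => (starRingEnd ℂ) (u (ξ - η))) 2 μ := by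
  have h1 : MemLp (⇑u ∘ fun η : ℝ => ξ - η) 2 μ :=
    (Lp.memLp u).comp_measurePreserving (Measure.measurePreserving_sub_left μ ξ)
  refine MemLp.of_le h1 ?_ (Eventually.of_forall fun t => by simp [Function.comp])
  exact Complex.continuous_conj.comp_aestronglyMeasurable h1.aestronglyMeasurable

lemma key_lemma (F : Lp ℂ 2 μ ≃ₗᵢ[ℂ] Lp ℂ 2 μ) (hF : IsFourierPlancherel F)
    (g : Lp ℂ 2 μ) (ξ : ℝ) :
    F ((memA g ξ).toLp _) = (memW (F g) ξ).toLp _ := by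
  have hτ : MeasurePreserving (fun η : ℝ => ξ - η) μ μ :=
    Measure.measurePreserving_sub_left μ ξ
  set h : ℝ → ℂ := fun t => (starRingEnd ℂ) (g t) * Complex.exp (Complex.I * ξ * t) with hh
  set w : ℝ → ℂ := fun η => (starRingEnd ℂ) ((F g) (ξ - η)) with hw
  set H : Lp ℂ 2 μ := (memA g ξ).toLp _ with hH
  set W : Lp ℂ 2 μ := (memW (F g) ξ).toLp _ with hW
  have hnorm : ∀ t, ‖h t‖ = ‖g t‖ := fun t => by simp [hh, Complex.norm_exp]
  have key : ∀ ε : ℝ, 0 < ε → ‖F H - W‖ ≤ 0 + ε := by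
    intro ε hε
    obtain ⟨s, hs, hμs, hsmall⟩ := (Lp.memLp g).exists_eLpNorm_indicator_compl_lt
      (by norm_num : (2:ℝ≥0∞) ≠ ∞) (ε := ENNReal.ofReal (ε/2))
      (by simp only [ne_eq, ENNReal.ofReal_eq_zero, not_le]; linarith)
    set g₁ : ℝ → ℂ := s.indicator ⇑g with hg₁
    set h₁ : ℝ → ℂ := s.indicator h with hh₁
    have g₁mem : MemLp g₁ 2 μ := (Lp.memLp g).indicator hs
    have h₁mem : MemLp h₁ 2 μ := (memA g ξ).indicator hs
    haveI : IsFiniteMeasure (Measure.restrict μ s) := ⟨by rwa [Measure.restrict_apply_univ]⟩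
    have g₁int : Integrable g₁ μ :=
      (integrable_indicator_iff hs).mpr (((Lp.memLp g).restrict s).integrable one_le_two)
    have h₁int : Integrable h₁ μ :=
      (integrable_indicator_iff hs).mpr (((memA g ξ).restrict s).integrable one_le_two)
    set G₁ : Lp ℂ 2 μ := g₁mem.toLp _ with hG₁d
    set H₁ : Lp ℂ 2 μ := h₁mem.toLp _ with hH₁d
    -- Fourier formulas for the truncated functions
    have hFG₁ : ⇑(F G₁) =ᵐ[μ] fun s' : ℝ =>
        𝕔 * ∫ t : ℝ, Complex.exp (-(Complex.I * s' * t)) * g₁ t := by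
      refine (hF G₁ (g₁int.congr g₁mem.coeFn_toLp.symm)).trans (Eventually.of_forall fun s' => ?_)
      have hι : (fun t : ℝ => Complex.exp (-(Complex.I * (s' : ℂ) * (t : ℂ))) * G₁ t)
          =ᵐ[μ] fun t : ℝ => Complex.exp (-(Complex.I * (s' : ℂ) * (t : ℂ))) * g₁ t :=
        g₁mem.coeFn_toLp.mono fun t ht => by dsimp only; rw [ht]
      simp only
      rw [integral_congr_ae hι]
    have hFH₁ : ⇑(F H₁) =ᵐ[μ] fun η : ℝ =>
        𝕔 * ∫ t : ℝ, Complex.exp (-(Complex.I * η * t)) * h₁ t := by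
      refine (hF H₁ (h₁int.congr h₁mem.coeFn_toLp.symm)).trans (Eventually.of_forall fun η => ?_)
      have hι : (fun t : ℝ => Complex.exp (-(Complex.I * (η : ℂ) * (t : ℂ))) * H₁ t)
          =ᵐ[μ] fun t : ℝ => Complex.exp (-(Complex.I * (η : ℂ) * (t : ℂ))) * h₁ t :=
        h₁mem.coeFn_toLp.mono fun t ht => by dsimp only; rw [ht]
      simp only
      rw [integral_congr_ae hι]
    -- pointwise identity between the two classical Fourier integrals
    have hpt : ∀ η : ℝ, 𝕔 * ∫ t : ℝ, Complex.exp (-(Complex.I * η * t)) * h₁ t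
        = (starRingEnd ℂ) (𝕔 * ∫ t : ℝ, Complex.exp (-(Complex.I * ((ξ - η : ℝ)) * t)) * g₁ t) := by
      intro η
      rw [map_mul, ← integral_conj]
      congr 1
      · rw [map_inv₀, Complex.conj_ofReal]
      · refine integral_congr_ae (Eventually.of_forall fun t => ?_)
        by_cases hts : t ∈ s
        · simp only [hh₁, hg₁, Set.indicator_of_mem hts, hh]
          rw [map_mul, ← Complex.exp_conj]
          have h2 : (starRingEnd ℂ) (-(Complex.I * ((ξ - η : ℝ)) * t)) =
              Complex.I * ((ξ : ℂ) - η) * t := by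
            simp only [map_neg, map_mul, Complex.conj_I, Complex.conj_ofReal]
            push_cast
            ring
          rw [h2]
          have h3 : Complex.exp (-(Complex.I * η * t)) * Complex.exp (Complex.I * ξ * t)
              = Complex.exp (Complex.I * ((ξ : ℂ) - η) * t) := by
            rw [← Complex.exp_add]; ring_nf
          calc Complex.exp (-(Complex.I * η * t)) * ((starRingEnd ℂ) (g t) *
                Complex.exp (Complex.I * ξ * t))
              = Complex.exp (-(Complex.I * η * t)) * Complex.exp (Complex.I * ξ * t) *
                (starRingEnd ℂ) (g t) := by ring
            _ = Complex.exp (Complex.I * ((ξ : ℂ) - η) * t) * (starRingEnd ℂ) (g t) := by rw [h3]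
        · simp [hh₁, hg₁, Set.indicator_of_notMem hts]
    -- identification of F H₁
    have hcomp : (fun η : ℝ => (F G₁) (ξ - η)) =ᵐ[μ] fun η : ℝ =>
        𝕔 * ∫ t : ℝ, Complex.exp (-(Complex.I * ((ξ - η : ℝ)) * t)) * g₁ t :=
      ae_of_ae_map (p := fun y : ℝ => (F G₁) y =
          𝕔 * ∫ t : ℝ, Complex.exp (-(Complex.I * (y : ℂ) * (t : ℂ))) * g₁ t)
        hτ.measurable.aemeasurable (by rw [hτ.map_eq]; exact hFG₁)
    have hFH₁' : ⇑(F H₁) =ᵐ[μ] fun η : ℝ => (starRingEnd ℂ) ((F G₁) (ξ - η)) := by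
      filter_upwards [hFH₁, hcomp] with η h1 h2
      rw [h1, hpt η, h2]
    -- norm estimates
    have hsh : eLpNorm (sᶜ.indicator h) 2 μ = eLpNorm (sᶜ.indicator ⇑g) 2 μ :=
      eLpNorm_congr_norm_ae (Eventually.of_forall fun t => by
        by_cases ht : t ∈ sᶜ <;>
          simp [Set.indicator_of_mem, Set.indicator_of_notMem, ht, hnorm t])
    have hne : eLpNorm (sᶜ.indicator ⇑g) 2 μ ≠ ⊤ := hsmall.ne_top
    have htr : (eLpNorm (sᶜ.indicator ⇑g) 2 μ).toReal < ε/2 := by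
      rw [← ENNReal.ofReal_toReal hne] at hsmall
      exact lt_of_lt_of_le (by exact_mod_cast (ENNReal.ofReal_lt_ofReal_iff (by linarith)).mp hsmall) le_rfl
    have e1 : ‖H₁ - H‖ < ε/2 := by
      have hsub : H₁ - H = (h₁mem.sub (memA g ξ)).toLp (h₁ - h) := (MemLp.toLp_sub _ _).symm
      have hfun : h₁ - h = -(sᶜ.indicator h) := by
        funext t; by_cases ht : t ∈ s <;> simp [hh₁, Set.indicator, ht]
      rw [hsub, Lp.norm_toLp, hfun, eLpNorm_neg, hsh]
      exact htr
    have e2 : ‖F H₁ - W‖ < ε/2 := by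
      have n1 : ‖F H₁ - W‖ = (eLpNorm (⇑(F H₁) - ⇑W) 2 μ).toReal := by
        rw [Lp.norm_def]
        congr 1
        exact eLpNorm_congr_ae (Lp.coeFn_sub _ _)
      have hWc : ⇑W =ᵐ[μ] w := (memW (F g) ξ).coeFn_toLp
      have n2 : eLpNorm (⇑(F H₁) - ⇑W) 2 μ
          = eLpNorm ((⇑(F G₁) - ⇑(F g)) ∘ fun η : ℝ => ξ - η) 2 μ := by
        refine Eq.trans (eLpNorm_congr_ae (hFH₁'.sub hWc)) ?_
        refine eLpNorm_congr_norm_ae (Eventually.of_forall fun η => ?_)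
        simp only [Pi.sub_apply, Function.comp_apply, hw]
        rw [← map_sub]
        exact RCLike.norm_conj _
      have n3 : eLpNorm ((⇑(F G₁) - ⇑(F g)) ∘ fun η : ℝ => ξ - η) 2 μ
          = eLpNorm (⇑(F G₁) - ⇑(F g)) 2 μ :=
        eLpNorm_comp_measurePreserving
          ((Lp.aestronglyMeasurable (F G₁)).sub (Lp.aestronglyMeasurable (F g))) hτ
      have n4 : eLpNorm (⇑(F G₁) - ⇑(F g)) 2 μ = eLpNorm ⇑(F G₁ - F g) 2 μ :=
        (eLpNorm_congr_ae (Lp.coeFn_sub _ _)).symm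
      have n5 : ‖F H₁ - W‖ = ‖F G₁ - F g‖ := by
        rw [n1, n2, n3, n4, Lp.norm_def]
      have n6 : ‖F G₁ - F g‖ = ‖G₁ - g‖ := by
        rw [← map_sub F, F.norm_map]
      have n7 : ‖G₁ - g‖ < ε/2 := by
        have hgc : g = (Lp.memLp g).toLp ⇑g := (Lp.toLp_coeFn g (Lp.memLp g)).symm
        have hsub : G₁ - g = (g₁mem.sub (Lp.memLp g)).toLp (g₁ - ⇑g) := by
          rw [MemLp.toLp_sub]; rw [← hgc]; exact Lp.memLp g
        have hfun : g₁ - ⇑g = -(sᶜ.indicator ⇑g) := by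
          funext t; by_cases ht : t ∈ s <;> simp [hg₁, Set.indicator, ht]
        rw [hsub, Lp.norm_toLp, hfun, eLpNorm_neg]
        exact htr
      rw [n5, n6]; exact n7
    calc ‖F H - W‖ ≤ ‖F H - F H₁‖ + ‖F H₁ - W‖ := norm_sub_le_norm_sub_add_norm_sub _ _ _
      _ = ‖H₁ - H‖ + ‖F H₁ - W‖ := by rw [← map_sub F, F.norm_map, norm_sub_rev]
      _ ≤ ε/2 + ε/2 := add_le_add e1.le e2.le
      _ = 0 + ε := by ring
  have h0 : ‖F H - W‖ ≤ 0 := le_of_forall_pos_le_add key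
  exact sub_eq_zero.mp (norm_le_zero_iff.mp h0)

/-- If `f, g ∈ L²₊(ℝ)` (Hardy space boundary values), then `f·g ∈ L¹(ℝ)` and its
classical Fourier transform vanishes on `(-∞,0)`:
`∫ f(x) g(x) e^{-iξx} dx = 0` for every `ξ < 0`. -/
theorem product_of_hardy_functions
    (F : Lp ℂ 2 (volume : Measure ℝ) ≃ₗᵢ[ℂ] Lp ℂ 2 (volume : Measure ℝ))
    (hF : IsFourierPlancherel F)
    (f g : Lp ℂ 2 (volume : Measure ℝ))
    (hf : ∀ᵐ ξ ∂(volume : Measure ℝ), ξ < 0 → (F f) ξ = 0)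
    (hg : ∀ᵐ ξ ∂(volume : Measure ℝ), ξ < 0 → (F g) ξ = 0) :
    Integrable (fun x : ℝ => f x * g x) volume ∧
      ∀ ξ : ℝ, ξ < 0 →
        ∫ x : ℝ, f x * g x * Complex.exp (-(Complex.I * ξ * x)) = 0 := by
  constructor
  · have h2 : (1:ℝ≥0∞)/1 = 1/2 + 1/2 := by rw [ENNReal.add_halves]; norm_num
    have := MemLp.smul (p := 2) (q := 2) (r := 1) (Lp.memLp g) (Lp.memLp f)
    exact memLp_one_iff_integrable.mp (by simpa [smul_eq_mul, Pi.smul_apply, Pi.mul_def] using this)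
  · intro ξ hξ
    have hτ : MeasurePreserving (fun η : ℝ => ξ - η) μ μ :=
      Measure.measurePreserving_sub_left μ ξ
    set H : Lp ℂ 2 μ := (memA g ξ).toLp _ with hH
    set W : Lp ℂ 2 μ := (memW (F g) ξ).toLp _ with hW
    have hkey : F H = W := key_lemma F hF g ξ
    have hHf : (inner ℂ H f : ℂ) = ∫ x : ℝ, f x * g x * Complex.exp (-(Complex.I * ξ * x)) := by
      rw [MeasureTheory.L2.inner_def]
      refine integral_congr_ae ?_
      filter_upwards [(memA g ξ).coeFn_toLp] with x hx
      rw [RCLike.inner_apply, hx]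
      rw [map_mul, Complex.conj_conj, ← Complex.exp_conj]
      have : (starRingEnd ℂ) (Complex.I * (ξ : ℂ) * (x : ℂ)) = -(Complex.I * ξ * x) := by
        simp only [map_mul, Complex.conj_I, Complex.conj_ofReal]
        ring
      rw [this]
      ring
    have hWf : (inner ℂ W (F f) : ℂ) = 0 := by
      rw [MeasureTheory.L2.inner_def]
      have hzero : ∀ᵐ η ∂μ, (inner ℂ (W η) ((F f) η) : ℂ) = 0 := by
        have hg' : ∀ᵐ η ∂μ, ξ - η < 0 → (F g) (ξ - η) = 0 :=
          ae_of_ae_map (p := fun y : ℝ => y < 0 → (F g) y = 0)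
            hτ.measurable.aemeasurable (by rw [hτ.map_eq]; exact hg)
        filter_upwards [hf, hg', (memW (F g) ξ).coeFn_toLp] with η h1 h2 h3
        rw [RCLike.inner_apply, h3]
        rcases lt_or_ge η 0 with hη | hη
        · rw [h1 hη, zero_mul]
        · rw [h2 (by linarith), map_zero, map_zero, mul_zero]
      rw [integral_eq_zero_of_ae hzero]
    have := F.inner_map_map H f
    rw [hkey, hWf] at this
    rw [← hHf, ← this]
end
end
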